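/- For each n, the number of left-walks of length 2n equals the number of right-walks of length 2n. -/

import Mathlib

open Filter

/-- A step of a lattice walk: North, East, South or West. -/
inductive Step : Type
  | N | E | S | W
  deriving DecidableEq

/-- The vector of a step. -/
def Step.vec : Step → ℤ × ℤ
  | .N => (0, 1)
  | .E => (1, 0)
  | .S => (0, -1)
  | .W => (-1, 0)

/-- The endpoint of a walk starting at the origin. -/
def endpt (w : List Step) : ℤ × ℤ := (w.map Step.vec).sum

/-- All points visited by a walk starting at the origin (including start and end). -/
def positions (w : List Step) : List (ℤ × ℤ) :=
  w.scanl (fun p s => p + s.vec) ((0, 0) : ℤ × ℤ)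

/-- A walk is eager if it contains no ES and no NW corner. -/
def Eager (w : List Step) : Prop :=
  ¬ [Step.E, Step.S] <:+: w ∧ ¬ [Step.N, Step.W] <:+: w

/-- A quarter-plane loop: a nonempty walk returning to its starting point and
staying (weakly) north-east of it. -/
def IsQPLoop (l : List Step) : Prop :=
  l ≠ [] ∧ endpt l = (0, 0) ∧ ∀ p ∈ positions l, 0 ≤ p.1 ∧ 0 ≤ p.2

/-- A walk is standard if every QP-subloop begins with an N step. -/
def Standard (w : List Step) : Prop :=
  ∀ a l b : List Step, w = a ++ l ++ b → IsQPLoop l → l.head? = some Step.N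

/-- The walk stays in the half-plane x + y ≥ 0. -/
def InHalfPlane (w : List Step) : Prop :=
  ∀ p ∈ positions w, 0 ≤ p.1 + p.2

/-- A big-walk: confined to the half-plane x+y ≥ 0, from (0,0) to the line x+y=0,
standard and eager. -/
def IsBigWalk (w : List Step) : Prop :=
  InHalfPlane w ∧ (endpt w).1 + (endpt w).2 = 0 ∧ Standard w ∧ Eager w

/-- A left-walk: a big-walk ending at (x,-x) with x ≤ 0. -/
def IsLeftWalk (w : List Step) : Prop := IsBigWalk w ∧ (endpt w).1 ≤ 0

/-- A right-walk: a big-walk ending at (x,-x) with x ≥ 0. -/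
def IsRightWalk (w : List Step) : Prop := IsBigWalk w ∧ 0 ≤ (endpt w).1

/-- Vertical-happy: every step taken from a point of the lines x+y=0 or x+y=1
is N or S. -/
def VerticalHappy (w : List Step) : Prop :=
  ∀ a s b, w = a ++ s :: b →
    ((endpt a).1 + (endpt a).2 = 0 ∨ (endpt a).1 + (endpt a).2 = 1) →
    s = Step.N ∨ s = Step.S

/-- A deque-walk: a vertical-happy big-walk. -/
def IsDequeWalk (w : List Step) : Prop := IsBigWalk w ∧ VerticalHappy w

/-- The walk stays in the quarter plane x, y ≥ 0. -/
def InQuarterPlane (w : List Step) : Prop :=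
  ∀ p ∈ positions w, 0 ≤ p.1 ∧ 0 ≤ p.2

/-- A 2sip-walk: a quarter-plane walk from (0,0) to (0,0), standard and eager. -/
def Is2sipWalk (w : List Step) : Prop :=
  InQuarterPlane w ∧ endpt w = (0, 0) ∧ Standard w ∧ Eager w

/-- `bCount n` = number of big-walks of length 2n. -/
noncomputable def bCount (n : ℕ) : ℕ :=
  Nat.card {w : List Step // w.length = 2 * n ∧ IsBigWalk w}

/-- `blCount n` = number of left-walks of length 2n. -/
noncomputable def blCount (n : ℕ) : ℕ :=
  Nat.card {w : List Step // w.length = 2 * n ∧ IsLeftWalk w}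

/-- `brCount n` = number of right-walks of length 2n. -/
noncomputable def brCount (n : ℕ) : ℕ :=
  Nat.card {w : List Step // w.length = 2 * n ∧ IsRightWalk w}

/-- `dCount n` = number of deque-walks of length 2n. -/
noncomputable def dCount (n : ℕ) : ℕ :=
  Nat.card {w : List Step // w.length = 2 * n ∧ IsDequeWalk w}

/-- `pCount n` = number of 2sip-walks of length 2n. -/
noncomputable def pCount (n : ℕ) : ℕ :=
  Nat.card {w : List Step // w.length = 2 * n ∧ Is2sipWalk w}

-- basics
def swp : Step → Step | .N => .E | .E => .N | .S => .W | .W => .S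
def swpP (p : ℤ × ℤ) : ℤ × ℤ := (p.2, p.1)
@[simp] lemma swp_swp (s : Step) : swp (swp s) = s := by cases s <;> rfl
@[simp] lemma vec_swp (s : Step) : (swp s).vec = swpP s.vec := by cases s <;> rfl
lemma swpP_add (p q : ℤ × ℤ) : swpP (p + q) = swpP p + swpP q := rfl
lemma swpP_le {p q : ℤ × ℤ} (h : p ≤ q) : swpP p ≤ swpP q := ⟨h.2, h.1⟩
lemma diag_swpP (p : ℤ × ℤ) : (swpP p).1 + (swpP p).2 = p.1 + p.2 := by
  simp [swpP]; ring

def pos (w : List Step) (i : ℕ) : ℤ × ℤ := endpt (w.take i)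

@[simp] lemma endpt_nil : endpt [] = 0 := rfl
lemma endpt_cons (s : Step) (t : List Step) : endpt (s :: t) = s.vec + endpt t := by
  simp [endpt]
lemma endpt_append (a b : List Step) : endpt (a ++ b) = endpt a + endpt b := by
  simp [endpt]
@[simp] lemma pos_zero (w : List Step) : pos w 0 = 0 := rfl
lemma pos_succ (w : List Step) (i : ℕ) (h : i < w.length) :
    pos w (i + 1) = pos w i + (w[i]).vec := by
  rw [pos, pos, List.take_succ, endpt_append, List.getElem?_eq_getElem h]
  simp [endpt_cons]
lemma pos_length (w : List Step) : pos w w.length = endpt w := by simp [pos]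
lemma pos_of_le (w : List Step) {i : ℕ} (h : w.length ≤ i) : pos w i = endpt w := by
  simp [pos, List.take_of_length_le h]

lemma pos_cons (s : Step) (t : List Step) (i : ℕ) :
    pos (s :: t) (i + 1) = s.vec + pos t i := by
  simp [pos, List.take_succ_cons, endpt_cons]

lemma mem_scanl (w : List Step) (p : ℤ × ℤ) : ∀ b,
    (p ∈ w.scanl (fun p s => p + s.vec) b ↔ ∃ i ≤ w.length, b + pos w i = p) := by
  induction w with
  | nil => intro b; simp [eq_comm]
  | cons s t ih =>
    intro b
    rw [List.scanl_cons]
    simp only [List.singleton_append, List.mem_cons]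
    rw [ih (b + s.vec)]
    constructor
    · rintro (rfl | ⟨i, hi, rfl⟩)
      · exact ⟨0, by simp, by simp⟩
      · exact ⟨i + 1, by simpa using hi, by rw [pos_cons]; ring⟩
    · rintro ⟨i, hi, rfl⟩
      match i with
      | 0 => left; simp
      | (j+1) =>
        right
        exact ⟨j, by simpa using hi, by rw [pos_cons]; ring⟩

lemma mem_positions (w : List Step) (p : ℤ × ℤ) :
    p ∈ positions w ↔ ∃ i ≤ w.length, pos w i = p := by
  rw [positions, mem_scanl]
  simp only [show ((0, 0) : ℤ × ℤ) = 0 from rfl, zero_add]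

lemma pos_mem_positions (w : List Step) {i : ℕ} (h : i ≤ w.length) : pos w i ∈ positions w :=
  (mem_positions w _).2 ⟨i, h, rfl⟩

def IsLoop (w : List Step) (a b : ℕ) : Prop :=
  a < b ∧ b ≤ w.length ∧ pos w b = pos w a ∧ ∀ k, a ≤ k → k ≤ b → pos w a ≤ pos w k

def Cov (w : List Step) (i : ℕ) : Prop := ∃ a b, IsLoop w a b ∧ a ≤ i ∧ i < b

open scoped Classical

noncomputable def phiA (c : ℕ → Prop) : List Step → ℕ → List Step
  | [], _ => []
  | s :: t, k => (if c k then s else swp s) :: phiA c t (k+1)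

noncomputable def phi (w : List Step) : List Step := phiA (Cov w) w 0

@[simp] lemma length_phiA (c : ℕ → Prop) (w : List Step) : ∀ k, (phiA c w k).length = w.length := by
  induction w with
  | nil => intro k; rfl
  | cons s t ih => intro k; simp [phiA, ih]

@[simp] lemma length_phi (w : List Step) : (phi w).length = w.length := length_phiA _ _ _

lemma getElem_phiA (c : ℕ → Prop) (w : List Step) : ∀ k i (h : i < w.length),
    (phiA c w k)[i]'(by simp [h]) = (if c (k + i) then w[i] else swp w[i]) := by
  induction w with
  | nil => intro k i h; simp at h
  | cons s t ih =>
    intro k i h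
    match i with
    | 0 => simp [phiA]
    | (j+1) =>
      have := ih (k+1) j (by simpa using h)
      simp only [phiA, List.getElem_cons_succ, this]
      congr 2
      omega

lemma getElem_phi (w : List Step) (i : ℕ) (h : i < w.length) :
    (phi w)[i]'(by simp [h]) = (if Cov w i then w[i] else swp w[i]) := by
  simpa [phi] using getElem_phiA (Cov w) w 0 i h

lemma pos_append_le (x y : List Step) {i : ℕ} (h : i ≤ x.length) :
    pos (x ++ y) i = pos x i := by
  simp [pos, List.take_append_of_le_length h]

lemma pos_append (x y : List Step) (j : ℕ) :
    pos (x ++ y) (x.length + j) = endpt x + pos y j := by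
  simp [pos, List.take_append, endpt_append, List.take_of_length_le (by omega : x.length ≤ x.length + j)]

lemma loop_of_decomp {w x l y : List Step} (hw : w = x ++ l ++ y) (hl : IsQPLoop l) :
    IsLoop w x.length (x.length + l.length) := by
  obtain ⟨hne, hend, hqp⟩ := hl
  have hpos : ∀ j, j ≤ l.length → pos w (x.length + j) = endpt x + pos l j := by
    intro j hj
    subst hw
    rw [List.append_assoc, pos_append, pos_append_le _ _ hj]
  have hwa : pos w x.length = endpt x := by
    have := hpos 0 (by omega)
    simpa using this
  refine ⟨by have := List.length_pos_iff.2 hne; omega, ?_, ?_, ?_⟩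
  · subst hw; simp
  · rw [hpos l.length (le_refl _), pos_length, hend, hwa]
    simp
  · intro k hk1 hk2
    rw [show k = x.length + (k - x.length) by omega, hpos _ (by omega), hwa]
    have hmem : pos l (k - x.length) ∈ positions l := pos_mem_positions l (by omega)
    have hq := hqp _ hmem
    have h0 : (0:ℤ×ℤ) ≤ pos l (k - x.length) := ⟨hq.1, hq.2⟩
    exact le_add_of_nonneg_right h0

lemma decomp_eq {w : List Step} {a b : ℕ} (hab : a ≤ b) (hb : b ≤ w.length) :
    w = w.take a ++ (w.drop a).take (b - a) ++ w.drop b := by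
  rw [List.append_assoc]
  have h1 : w.take a ++ (w.drop a).take (b - a) = w.take b := by
    rw [← List.take_add]
    congr 1
    omega
  rw [← List.append_assoc, h1, List.take_append_drop]

lemma decomp_of_loop {w : List Step} {a b : ℕ} (h : IsLoop w a b) :
    IsQPLoop ((w.drop a).take (b - a)) := by
  obtain ⟨hab, hb, hend, hmin⟩ := h
  set l := (w.drop a).take (b - a) with hldef
  have hllen : l.length = b - a := by
    simp [hldef]; omega
  have hta : (w.take a).length = a := by simp; omega
  have hw : w = w.take a ++ l ++ w.drop b := decomp_eq (le_of_lt hab) hb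
  have hpos : ∀ j, j ≤ b - a → pos w (a + j) = endpt (w.take a) + pos l j := by
    intro j hj
    conv_lhs => rw [hw, List.append_assoc]
    rw [show a + j = (w.take a).length + j by omega, pos_append,
      pos_append_le _ _ (by omega : j ≤ l.length)]
  have hwa : pos w a = endpt (w.take a) := by
    have := hpos 0 (by omega)
    simpa using this
  refine ⟨?_, ?_, ?_⟩
  · intro hnil
    rw [hnil] at hllen
    simp at hllen
    omega
  · have h1 := hpos (b - a) (le_refl _)
    rw [show a + (b - a) = b by omega, hend, hwa, ← hllen, pos_length] at h1
    have h2 : endpt (w.take a) + (0:ℤ×ℤ) = endpt (w.take a) + endpt l := by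
      rw [add_zero]; exact h1
    have h3 := (add_left_cancel h2).symm
    rw [h3]
    rfl
  · intro p hp
    rw [mem_positions] at hp
    obtain ⟨j, hj, rfl⟩ := hp
    rw [hllen] at hj
    have h1 := hpos j hj
    have h2 := hmin (a + j) (by omega) (by omega)
    rw [h1, hwa] at h2
    nth_rewrite 1 [← add_zero (endpt (w.take a))] at h2
    have h0 := le_of_add_le_add_left h2
    exact ⟨h0.1, h0.2⟩

def Sync (w : List Step) (s : ℕ) : Prop := ∀ c d, IsLoop w c d → ¬(c < s ∧ s < d)

lemma loop_merge {w : List Step} {a b c d : ℕ} (h1 : IsLoop w a b) (h2 : IsLoop w c d)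
    (hac : a ≤ c) (hcb : c ≤ b) : IsLoop w a (max b d) := by
  rcases le_or_gt d b with hdb | hbd
  · rwa [max_eq_left hdb]
  rw [max_eq_right (le_of_lt hbd)]
  obtain ⟨hab, hbn, hbe, hbm⟩ := h1
  obtain ⟨hcd, hdn, hde, hdm⟩ := h2
  have hca : pos w c = pos w a := by
    have h3 : pos w a ≤ pos w c := hbm c hac hcb
    have h4 : pos w c ≤ pos w b := hdm b hcb (le_of_lt hbd)
    rw [hbe] at h4
    exact le_antisymm h4 h3
  refine ⟨by omega, hdn, by rw [hde, hca], ?_⟩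
  intro k hk1 hk2
  rcases le_or_gt k b with hkb | hbk
  · exact hbm k hk1 hkb
  · rw [← hca]
    exact hdm k (by omega) hk2

lemma exists_component {w : List Step} {i : ℕ} (h : Cov w i) :
    ∃ a b, IsLoop w a b ∧ a ≤ i ∧ i < b ∧ Sync w a ∧ Sync w b ∧
      (∀ c d, IsLoop w c d → c ≤ i → i < d → a ≤ c ∧ d ≤ b) := by
  have hex : ∃ a, ∃ b, IsLoop w a b ∧ a ≤ i ∧ i < b := h
  obtain ⟨b₀, hb₀, ha1, ha2⟩ : ∃ b, IsLoop w (Nat.find hex) b ∧ Nat.find hex ≤ i ∧ i < b :=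
    Nat.find_spec hex
  set a := Nat.find hex with hadef
  have hamin : ∀ c d, IsLoop w c d → c ≤ i → i < d → a ≤ c := fun c d hl h1 h2 =>
    Nat.find_min' hex ⟨d, hl, h1, h2⟩
  set b := Nat.findGreatest (fun b => IsLoop w a b ∧ i < b) w.length with hbdef
  have hbspec : IsLoop w a b ∧ i < b :=
    Nat.findGreatest_spec (P := fun b => IsLoop w a b ∧ i < b) hb₀.2.1 ⟨hb₀, ha2⟩
  have hbmax : ∀ d, IsLoop w a d → i < d → d ≤ b := fun d hl h2 =>
    Nat.le_findGreatest (P := fun b => IsLoop w a b ∧ i < b) hl.2.1 ⟨hl, h2⟩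
  obtain ⟨hab, hib⟩ := hbspec
  have hdmax : ∀ c d, IsLoop w c d → c ≤ i → i < d → a ≤ c ∧ d ≤ b := by
    intro c d hl h1 h2
    have hac := hamin c d hl h1 h2
    have hmerge := loop_merge hab hl hac (by omega)
    have := hbmax _ hmerge (by omega)
    exact ⟨hac, by omega⟩
  refine ⟨a, b, hab, ha1, hib, ?_, ?_, hdmax⟩
  · intro c d hl ⟨hca, had⟩
    have hmerge := loop_merge hl hab (by omega) (by omega)
    have := hamin _ _ hmerge (by omega) (by omega : i < max d b)
    omega
  · intro c d hl ⟨hcb, hbd⟩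
    rcases le_or_gt c a with hca | hac
    · have hmerge := loop_merge hl hab hca (by omega : a ≤ d)
      have h5 := hamin _ _ hmerge (by omega) (by omega : i < max d b)
      have h6 : c = a := by omega
      rw [h6] at hl
      have := hbmax d hl (by omega)
      omega
    · have hmerge := loop_merge hab hl (by omega) (by omega : c ≤ b)
      have := hbmax _ hmerge (by omega : i < max b d)
      omega

lemma cov_lt_length {w : List Step} {i : ℕ} (h : Cov w i) : i < w.length := by
  obtain ⟨a, b, hl, _, h2⟩ := h
  have := hl.2.1
  omega

lemma pos_phi_succ_cov {w : List Step} {i : ℕ} (h : Cov w i) :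
    pos (phi w) (i + 1) = pos (phi w) i + (w[i]'(cov_lt_length h)).vec := by
  have hi := cov_lt_length h
  rw [pos_succ (phi w) i (by simpa using hi), getElem_phi w i hi, if_pos h]

lemma pos_phi_succ_uncov {w : List Step} {i : ℕ} (h : ¬ Cov w i) (hi : i < w.length) :
    pos (phi w) (i + 1) = pos (phi w) i + swpP (w[i]).vec := by
  rw [pos_succ (phi w) i (by simpa using hi), getElem_phi w i hi, if_neg h, vec_swp]

lemma pos_phi_seg {w : List Step} {a : ℕ} : ∀ i, a ≤ i → i ≤ w.length →
    (∀ j, a ≤ j → j < i → Cov w j) →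
    pos (phi w) i = pos (phi w) a + (pos w i - pos w a) := by
  intro i
  induction i with
  | zero => intro h1 _ _; have : a = 0 := by omega
            subst this; simp
  | succ m ih =>
    intro h1 h2 hcov
    rcases Nat.lt_or_ge a (m+1) with ham | ham
    · have ham' : a ≤ m := by omega
      have hc : Cov w m := hcov m ham' (by omega)
      rw [pos_phi_succ_cov hc, ih ham' (by omega) (fun j hj1 hj2 => hcov j hj1 (by omega)),
        pos_succ w m (cov_lt_length hc)]
      abel
    · have : a = m + 1 := by omega
      subst this; simp

@[simp] lemma swpP_swpP (p : ℤ × ℤ) : swpP (swpP p) = p := rfl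

lemma swpP_le_iff {p q : ℤ × ℤ} : swpP p ≤ swpP q ↔ p ≤ q :=
  ⟨fun h => by simpa using swpP_le h, swpP_le⟩

lemma sync_pos (w : List Step) : ∀ i, i ≤ w.length → Sync w i → pos (phi w) i = swpP (pos w i) := by
  intro i
  induction i using Nat.strong_induction_on with
  | _ i ih =>
    match i with
    | 0 => intro _ _; simp [swpP]; rfl
    | (m+1) =>
      intro hlen hsync
      by_cases hc : Cov w m
      · obtain ⟨a, b, hab, ha1, hib, hsa, hsb, hmax⟩ := exists_component hc
        have hbm : b = m + 1 := by
          have := hsync a b hab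
          omega
        have hQa := ih a (by omega) (by omega) hsa
        have hseg := pos_phi_seg (w := w) (a := a) (m+1) (by omega) hlen
          (fun j hj1 hj2 => ⟨a, b, hab, hj1, by omega⟩)
        rw [hseg, hQa]
        have he : pos w (m+1) = pos w a := by rw [← hbm]; exact hab.2.2.1
        rw [he]
        abel
      · have hsm : Sync w m := by
          intro c d hl hcd
          exact hc ⟨c, d, hl, by omega, by omega⟩
        have hQm := ih m (by omega) (by omega) hsm
        rw [pos_phi_succ_uncov hc (by omega), hQm, pos_succ w m (by omega), swpP_add]

lemma sync_length (w : List Step) : Sync w w.length := by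
  intro c d hl hcd
  have := hl.2.1
  omega

lemma diag_vec_swp (s : Step) : ((swp s).vec).1 + ((swp s).vec).2 = (s.vec).1 + (s.vec).2 := by
  cases s <;> simp [swp, Step.vec]

lemma diag_pos_phi (w : List Step) : ∀ i, i ≤ w.length →
    (pos (phi w) i).1 + (pos (phi w) i).2 = (pos w i).1 + (pos w i).2 := by
  intro i
  induction i with
  | zero => intro _; simp
  | succ m ih =>
    intro h
    have hm : m < w.length := by omega
    rw [pos_succ w m hm, pos_succ (phi w) m (by simpa using hm), getElem_phi w m hm]
    have hdm := ih (by omega)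
    by_cases hc : Cov w m
    · rw [if_pos hc]
      simp only [Prod.fst_add, Prod.snd_add]
      omega
    · rw [if_neg hc]
      simp only [Prod.fst_add, Prod.snd_add]
      have := diag_vec_swp (w[m])
      omega

lemma loop_phi_of_loop {w : List Step} {a b : ℕ} (h : IsLoop w a b) : IsLoop (phi w) a b := by
  obtain ⟨hab, hbl, he, hm⟩ := h
  have hseg : ∀ k, a ≤ k → k ≤ b → pos (phi w) k = pos (phi w) a + (pos w k - pos w a) :=
    fun k hk1 hk2 => pos_phi_seg k hk1 (by omega)
      (fun j hj1 hj2 => ⟨a, b, ⟨hab, hbl, he, hm⟩, hj1, by omega⟩)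
  refine ⟨hab, by simpa using hbl, ?_, ?_⟩
  · rw [hseg b (by omega) (le_refl b), he]
    simp
  · intro k hk1 hk2
    rw [hseg k hk1 hk2]
    have := hm k hk1 hk2
    have h0 : (0:ℤ×ℤ) ≤ pos w k - pos w a := sub_nonneg.2 this
    exact le_add_of_nonneg_right h0

lemma loop_of_loop_phi (w : List Step) : ∀ n a b, b - a ≤ n → IsLoop (phi w) a b → IsLoop w a b := by
  intro n
  induction n with
  | zero => intro a b h hl; have := hl.1; omega
  | succ n ih =>
    intro a b hn hl
    obtain ⟨hab, hbl, hQe, hQm⟩ := hl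
    have hblen : b ≤ w.length := by simpa using hbl
    by_cases htouch : ∃ c, a < c ∧ c < b ∧ pos (phi w) c = pos (phi w) a
    · obtain ⟨c, h1, h2, h3⟩ := htouch
      have l1 : IsLoop (phi w) a c :=
        ⟨h1, by simpa using (le_trans (le_of_lt h2) hblen), h3,
          fun k hk1 hk2 => hQm k hk1 (by omega)⟩
      have l2 : IsLoop (phi w) c b :=
        ⟨h2, hbl, by rw [hQe, h3], fun k hk1 hk2 => by rw [h3]; exact hQm k (by omega) hk2⟩
      have w1 := ih a c (by omega) l1
      have w2 := ih c b (by omega) l2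
      have hmg := loop_merge w1 w2 (le_of_lt h1) (le_refl c)
      rwa [max_eq_right (by omega)] at hmg
    · by_cases hcover : ∃ α β, IsLoop w α β ∧ α ≤ a ∧ b ≤ β
      · obtain ⟨α, β, hαβ, h1, h2⟩ := hcover
        have hseg : ∀ k, a ≤ k → k ≤ b → pos (phi w) k = pos (phi w) a + (pos w k - pos w a) :=
          fun k hk1 hk2 => pos_phi_seg k hk1 (by omega)
            (fun j hj1 hj2 => ⟨α, β, hαβ, by omega, by omega⟩)
        refine ⟨hab, hblen, ?_, ?_⟩
        · have h3 := hseg b (by omega) (le_refl b)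
          rw [hQe] at h3
          have h4 : pos (phi w) a + (0:ℤ×ℤ) = pos (phi w) a + (pos w b - pos w a) := by
            rw [add_zero]; exact h3
          have h5 := (add_left_cancel h4).symm
          have := sub_eq_zero.mp h5
          linear_combination this
        · intro k hk1 hk2
          have h5 := hQm k hk1 hk2
          rw [hseg k hk1 hk2] at h5
          nth_rewrite 1 [← add_zero (pos (phi w) a)] at h5
          have h6 := le_of_add_le_add_left h5
          exact sub_nonneg.mp h6
      · by_cases hsa : Sync w a
        · by_cases hsb : Sync w b
          · -- main case: both ends sync
            have hQa := sync_pos w a (by omega) hsa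
            have hQb := sync_pos w b hblen hsb
            refine ⟨hab, hblen, ?_, ?_⟩
            · have : swpP (pos w b) = swpP (pos w a) := by rw [← hQa, ← hQb, hQe]
              have := congrArg swpP this
              simpa using this
            · intro k hk1 hk2
              by_cases hsk : Sync w k
              · have hQk := sync_pos w k (by omega) hsk
                have := hQm k hk1 hk2
                rw [hQk, hQa] at this
                exact swpP_le_iff.mp this
              · 
                obtain ⟨c, d, hcd, hck⟩ := by
                  simpa [Sync, not_forall] using hsk
                have hcov : Cov w k := ⟨c, d, hcd, by omega, by omega⟩
                obtain ⟨c₀, d₀, hc₀d₀, hc₀1, hc₀2, hsc₀, hsd₀, hmax⟩ := exists_component hcov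
                have hka : a < k := by
                  rcases Nat.lt_or_ge a k with h | h
                  · exact h
                  · have : k = a := by omega
                    subst this
                    exact absurd hsa (by intro hs; exact (hs c d hcd) hck)
                have hkb : k < b := by
                  rcases Nat.lt_or_ge k b with h | h
                  · exact h
                  · have : k = b := by omega
                    subst this
                    exact absurd hsb (by intro hs; exact (hs c d hcd) hck)
                have hac₀ : a ≤ c₀ := by
                  by_contra hcon
                  push_neg at hcon
                  exact (hsa c₀ d₀ hc₀d₀) ⟨hcon, by omega⟩
                have hQc₀ := sync_pos w c₀ (by omega) hsc₀
                have h7 := hQm c₀ hac₀ (by omega)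
                rw [hQc₀, hQa] at h7
                have h8 : pos w a ≤ pos w c₀ := swpP_le_iff.mp h7
                have h9 := hc₀d₀.2.2.2 k hc₀1 (by omega)
                exact le_trans h8 h9
          · -- b not sync: contradiction
            exfalso
            obtain ⟨c, d, hcd, hck⟩ := by simpa [Sync, not_forall] using hsb
            have hcov : Cov w b := ⟨c, d, hcd, by omega, by omega⟩
            obtain ⟨a₁, b₁, ha₁b₁, h1, h2, hs₁, hs₂, hmax⟩ := exists_component hcov
            have ha₁c : a₁ ≤ c := (hmax c d hcd (by omega) (by omega)).1
            have haa₁ : a < a₁ := by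
              by_contra hcon
              push_neg at hcon
              exact hcover ⟨a₁, b₁, ha₁b₁, hcon, by omega⟩
            have ha₁b : a₁ < b := by omega
            have hQa₁ := sync_pos w a₁ (by omega) hs₁
            have hseg := pos_phi_seg (w := w) (a := a₁) b (by omega) hblen
              (fun j hj1 hj2 => ⟨a₁, b₁, ha₁b₁, hj1, by omega⟩)
            have hmin := ha₁b₁.2.2.2 b (by omega) (by omega)
            have hup : pos (phi w) a₁ ≤ pos (phi w) b := by
              rw [hseg]
              have h0 : (0:ℤ×ℤ) ≤ pos w b - pos w a₁ := sub_nonneg.2 hmin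
              exact le_add_of_nonneg_right h0
            rw [hQe] at hup
            have hdown := hQm a₁ (by omega) (by omega)
            have heq : pos (phi w) a₁ = pos (phi w) a := le_antisymm hup hdown
            exact htouch ⟨a₁, haa₁, ha₁b, heq⟩
        · -- a not sync: contradiction
          exfalso
          obtain ⟨c, d, hcd, hck⟩ := by simpa [Sync, not_forall] using hsa
          have hcov : Cov w a := ⟨c, d, hcd, by omega, by omega⟩
          obtain ⟨a₀, b₀, ha₀b₀, h1, h2, hs₁, hs₂, hmax⟩ := exists_component hcov
          have ha₀c : a₀ ≤ c := (hmax c d hcd (by omega) (by omega)).1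
          have hb₀b : b₀ < b := by
            by_contra hcon
            push_neg at hcon
            exact hcover ⟨a₀, b₀, ha₀b₀, by omega, hcon⟩
          have hQa₀ := sync_pos w a₀ (by omega) hs₁
          have hQb₀ := sync_pos w b₀ (by omega) hs₂
          have hPe : pos w b₀ = pos w a₀ := ha₀b₀.2.2.1
          have hseg := pos_phi_seg (w := w) (a := a₀) a (by omega) (by omega)
            (fun j hj1 hj2 => ⟨a₀, b₀, ha₀b₀, hj1, by omega⟩)
          have hQb₀a : pos (phi w) b₀ = pos (phi w) a₀ := by rw [hQa₀, hQb₀, hPe]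
          have hd1 := hQm b₀ (by omega) (by omega)
          rw [hQb₀a, hseg] at hd1
          nth_rewrite 2 [← add_zero (pos (phi w) a₀)] at hd1
          have h6 := le_of_add_le_add_left hd1
          have h7 : pos w a ≤ pos w a₀ := sub_nonpos.mp h6
          have h9 : pos w a₀ ≤ pos w a := ha₀b₀.2.2.2 a (by omega) (by omega)
          have hPaa : pos w a = pos w a₀ := le_antisymm h7 h9
          have hQaa : pos (phi w) a = pos (phi w) a₀ := by
            rw [hseg, hPaa]
            simp
          exact htouch ⟨b₀, by omega, hb₀b, by rw [hQb₀a, hQaa]⟩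

lemma loop_phi_iff (w : List Step) (a b : ℕ) : IsLoop (phi w) a b ↔ IsLoop w a b :=
  ⟨fun h => loop_of_loop_phi w (b - a) a b le_rfl h, loop_phi_of_loop⟩

lemma cov_phi (w : List Step) (i : ℕ) : Cov (phi w) i ↔ Cov w i := by
  unfold Cov
  constructor <;> rintro ⟨a, b, hl, h1, h2⟩ <;>
    exact ⟨a, b, by rwa [loop_phi_iff] at *, h1, h2⟩

lemma phi_phi (w : List Step) : phi (phi w) = w := by
  apply List.ext_getElem (by simp)
  intro i h1 h2
  rw [getElem_phi (phi w) i (by simpa using h2)]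
  by_cases hc : Cov w i
  · rw [if_pos ((cov_phi w i).mpr hc), getElem_phi w i h2, if_pos hc]
  · rw [if_neg (fun h => hc ((cov_phi w i).mp h)), getElem_phi w i h2, if_neg hc, swp_swp]

lemma endpt_phi (w : List Step) : endpt (phi w) = swpP (endpt w) := by
  have h := sync_pos w w.length le_rfl (sync_length w)
  rw [pos_length] at h
  rw [← h, ← pos_length (phi w), length_phi]

lemma inHalfPlane_phi {w : List Step} (hw : InHalfPlane w) : InHalfPlane (phi w) := by
  intro p hp
  rw [mem_positions] at hp
  obtain ⟨i, hi, rfl⟩ := hp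
  have hi' : i ≤ w.length := by simpa using hi
  have h1 := diag_pos_phi w i hi'
  have h2 := hw _ (pos_mem_positions w hi')
  omega

lemma infix_pair {x y : Step} {v : List Step} (h : [x, y] <:+: v) :
    ∃ i, ∃ hlt : i + 1 < v.length, v[i]'(by omega) = x ∧ v[i+1]'hlt = y := by
  obtain ⟨s, t, hst⟩ := h
  subst hst
  refine ⟨s.length, by simp, ?_, ?_⟩
  · simp [List.getElem_append]
  · simp [List.getElem_append]

lemma pair_infix {x y : Step} {v : List Step} (i : ℕ) (hlt : i + 1 < v.length)
    (h1 : v[i]'(by omega) = x) (h2 : v[i+1]'hlt = y) : [x, y] <:+: v := by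
  refine ⟨v.take i, v.drop (i+2), ?_⟩
  have e1 : v.drop i = v[i]'(by omega) :: v.drop (i+1) := List.drop_eq_getElem_cons (by omega)
  have e2 : v.drop (i+1) = v[i+1]'hlt :: v.drop (i+2) := List.drop_eq_getElem_cons hlt
  rw [h1] at e1
  rw [h2] at e2
  calc v.take i ++ [x, y] ++ v.drop (i + 2) = v.take i ++ (x :: y :: v.drop (i+2)) := by simp
  _ = v.take i ++ v.drop i := by rw [e1, e2]
  _ = v := List.take_append_drop i v

lemma loop_starts_N {w : List Step} {a b : ℕ} (hst : Standard w) (h : IsLoop w a b) :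
    w[a]'(by have := h.1; have := h.2.1; omega) = Step.N := by
  have hq := decomp_of_loop h
  have hd := decomp_eq (le_of_lt h.1) h.2.1
  have hhead := hst _ _ _ hd hq
  have hlen : ((w.drop a).take (b - a)).length = b - a := by
    simp
    have := h.1
    have := h.2.1
    omega
  have h0 : 0 < ((w.drop a).take (b - a)).length := by
    rw [hlen]; have := h.1; omega
  have hne : (w.drop a).take (b - a) ≠ [] := hq.1
  rw [List.head?_eq_head hne] at hhead
  have hh := Option.some_injective _ hhead
  rw [List.head_eq_getElem] at hh
  simpa [List.getElem_take, List.getElem_drop] using hh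

lemma vec_nonneg_E : (0:ℤ×ℤ) ≤ Step.E.vec := by constructor <;> simp [Step.vec]
lemma vec_nonneg_N : (0:ℤ×ℤ) ≤ Step.N.vec := by constructor <;> simp [Step.vec]

lemma two_loop {w : List Step} {i : ℕ} (hlt : i + 1 < w.length)
    (hx : w[i]'(by omega) = Step.E ∧ w[i+1]'hlt = Step.W ∨
          w[i]'(by omega) = Step.N ∧ w[i+1]'hlt = Step.S) :
    IsLoop w i (i + 2) := by
  have e1 : pos w (i+1) = pos w i + (w[i]'(by omega)).vec := pos_succ w i (by omega)
  have e2 : pos w (i+2) = pos w (i+1) + (w[i+1]'hlt).vec := pos_succ w (i+1) hlt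
  have hnn : (0:ℤ×ℤ) ≤ (w[i]'(by omega)).vec := by
    rcases hx with ⟨h1, _⟩ | ⟨h1, _⟩ <;> rw [h1]
    · exact vec_nonneg_E
    · exact vec_nonneg_N
  have hcancel : pos w (i+2) = pos w i := by
    rw [e2, e1]
    rcases hx with ⟨h1, h2⟩ | ⟨h1, h2⟩ <;> rw [h1, h2] <;>
      simp [Step.vec, add_assoc, Prod.mk_add_mk, Prod.mk_zero_zero]
  refine ⟨by omega, by omega, hcancel, ?_⟩
  intro k hk1 hk2
  have : k = i ∨ k = i + 1 ∨ k = i + 2 := by omega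
  rcases this with rfl | h | h
  · exact le_refl _
  · rw [h, e1]; exact le_add_of_nonneg_right hnn
  · rw [h, hcancel]

lemma eager_phi {w : List Step} (hst : Standard w) (he : Eager w) : Eager (phi w) := by
  have key : ∀ x y : Step, (x = Step.E ∧ y = Step.S ∨ x = Step.N ∧ y = Step.W) →
      ¬ [x, y] <:+: phi w := by
    rintro x y hxy hinf
    obtain ⟨i, hlt, hgx, hgy⟩ := infix_pair hinf
    have hlt' : i + 1 < w.length := by simpa using hlt
    rw [getElem_phi w i (by omega)] at hgx
    rw [getElem_phi w (i+1) hlt'] at hgy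
    by_cases hci : Cov w i <;> by_cases hci1 : Cov w (i+1)
    · -- both covered: bad pair in w, contra eager
      rw [if_pos hci] at hgx
      rw [if_pos hci1] at hgy
      have hinfw : [x, y] <:+: w := pair_infix i hlt' hgx hgy
      rcases hxy with ⟨rfl, rfl⟩ | ⟨rfl, rfl⟩
      · exact he.1 hinfw
      · exact he.2 hinfw
    · -- i covered, i+1 not: w has EW or NS at i, so i+1 covered: contra
      rw [if_pos hci] at hgx
      rw [if_neg hci1] at hgy
      have hwy : w[i+1]'hlt' = swp y := by rw [← hgy, swp_swp]
      have hloop : IsLoop w i (i + 2) := by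
        apply two_loop hlt'
        rcases hxy with ⟨rfl, rfl⟩ | ⟨rfl, rfl⟩
        · left; exact ⟨hgx, by rw [hwy]; rfl⟩
        · right; exact ⟨hgx, by rw [hwy]; rfl⟩
      exact hci1 ⟨i, i+2, hloop, by omega, by omega⟩
    · -- i not covered, i+1 covered: component starts at i+1, so w[i+1] = N
      rw [if_neg hci] at hgx
      rw [if_pos hci1] at hgy
      obtain ⟨a₁, b₁, hl₁, h1, h2, _, _, hmax⟩ := exists_component hci1
      have ha₁ : a₁ = i + 1 := by
        rcases Nat.lt_or_ge a₁ (i+1) with h | h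
        · exact absurd ⟨a₁, b₁, hl₁, by omega, by omega⟩ hci
        · omega
      subst ha₁
      have hN : w[i+1]'(by have := hl₁.1; have := hl₁.2.1; omega) = Step.N :=
        loop_starts_N hst hl₁
      rw [hN] at hgy
      rcases hxy with ⟨_, rfl⟩ | ⟨_, rfl⟩ <;> simp at hgy
    · -- neither covered: swapped bad pair in w, contra eager
      rw [if_neg hci] at hgx
      rw [if_neg hci1] at hgy
      have hwx : w[i]'(by omega) = swp x := by rw [← hgx, swp_swp]
      have hwy : w[i+1]'hlt' = swp y := by rw [← hgy, swp_swp]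
      rcases hxy with ⟨rfl, rfl⟩ | ⟨rfl, rfl⟩
      · exact he.2 (pair_infix i hlt' (by rw [hwx]; rfl) (by rw [hwy]; rfl))
      · exact he.1 (pair_infix i hlt' (by rw [hwx]; rfl) (by rw [hwy]; rfl))
  exact ⟨key _ _ (Or.inl ⟨rfl, rfl⟩), key _ _ (Or.inr ⟨rfl, rfl⟩)⟩

lemma standard_phi {w : List Step} (hst : Standard w) : Standard (phi w) := by
  intro x l y hdecomp hq
  have hloopφ : IsLoop (phi w) x.length (x.length + l.length) := loop_of_decomp hdecomp hq
  have hloopw : IsLoop w x.length (x.length + l.length) := (loop_phi_iff w _ _).mp hloopφ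
  have hxlt : x.length < w.length := by
    have := hloopw.1; have := hloopw.2.1; omega
  have hN : w[x.length]'hxlt = Step.N := loop_starts_N hst hloopw
  have hcov : Cov w x.length := ⟨_, _, hloopw, le_refl _, hloopw.1⟩
  have hφ : (phi w)[x.length]'(by simpa using hxlt) = Step.N := by
    rw [getElem_phi w _ hxlt, if_pos hcov, hN]
  cases l with
  | nil => exact absurd rfl hq.1
  | cons z l' =>
    have hz : (phi w)[x.length]'(by simpa using hxlt) = z := by
      rw [List.getElem_of_eq hdecomp]
      simp [List.getElem_append]
    rw [List.head?_cons, ← hz, hφ]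

lemma isBigWalk_phi {w : List Step} (h : IsBigWalk w) : IsBigWalk (phi w) := by
  obtain ⟨hhp, hdiag, hst, he⟩ := h
  refine ⟨inHalfPlane_phi hhp, ?_, standard_phi hst, eager_phi hst he⟩
  rw [endpt_phi, diag_swpP]
  exact hdiag

lemma isRightWalk_phi {w : List Step} (h : IsLeftWalk w) : IsRightWalk (phi w) := by
  obtain ⟨hb, hx⟩ := h
  refine ⟨isBigWalk_phi hb, ?_⟩
  rw [endpt_phi]
  have hd := hb.2.1
  simp only [swpP]
  omega

lemma isLeftWalk_phi {w : List Step} (h : IsRightWalk w) : IsLeftWalk (phi w) := by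
  obtain ⟨hb, hx⟩ := h
  refine ⟨isBigWalk_phi hb, ?_⟩
  rw [endpt_phi]
  have hd := hb.2.1
  simp only [swpP]
  omega

/-- For each n, the number of left-walks of length 2n equals the number of
right-walks of length 2n. -/
theorem leftWalks_eq_rightWalks (n : ℕ) : blCount n = brCount n := by
  unfold blCount brCount
  apply Nat.card_congr
  refine ⟨fun p => ⟨phi p.1, by rw [length_phi]; exact p.2.1, isRightWalk_phi p.2.2⟩,
          fun p => ⟨phi p.1, by rw [length_phi]; exact p.2.1, isLeftWalk_phi p.2.2⟩, ?_, ?_⟩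
  · intro ⟨w, hw⟩
    simp [phi_phi]
  · intro ⟨w, hw⟩
    simp [phi_phi]
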